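/- Let r ≥ 2 be an integer. Then the walk matrix W(M_2) of the matrix M_2 has rank r over ℝ (equivalently, W(M_2) is nonsingular). -/

import Mathlib

open Matrix BigOperators

/-- The divisor-type matrix `M₂`: tridiagonal with diagonal `(1, 2, ..., 2)`,
superdiagonal entries `1`, subdiagonal entries `1` except the last one which is `2`
(0-based indexing). -/
def M2 (r : ℕ) : Matrix (Fin r) (Fin r) ℤ :=
  Matrix.of fun i j =>
    if i = j then (if (i : ℕ) = 0 then 1 else 2)
    else if (i : ℕ) + 1 = (j : ℕ) then 1
    else if (j : ℕ) + 1 = (i : ℕ) then (if (i : ℕ) = r - 1 then 2 else 1)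
    else 0

/-- The walk matrix of a square matrix `M`: its `j`-th column is `M^j · e` (0-based `j`). -/
def walkMatrix {r : ℕ} (M : Matrix (Fin r) (Fin r) ℤ) : Matrix (Fin r) (Fin r) ℤ :=
  Matrix.of fun i j => (M ^ (j : ℕ)).mulVec (fun _ => 1) i

/-! ### Auxiliary development -/

/-- the first standard basis vector -/
def dvec (r : ℕ) : Fin r → ℤ := fun i => if (i : ℕ) = 0 then 1 else 0

/-- Krylov vectors of `dvec` under `M2`. -/
def vvec (r : ℕ) (m : ℕ) : Fin r → ℤ := ((M2 r) ^ m).mulVec (dvec r)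

lemma M2_apply (r : ℕ) (i j : Fin r) :
    M2 r i j =
      (if (i : ℕ) = (j : ℕ) then (if (i : ℕ) = 0 then 1 else 2) else 0)
      + (if (i : ℕ) + 1 = (j : ℕ) then 1 else 0)
      + (if (j : ℕ) + 1 = (i : ℕ) then (if (i : ℕ) = r - 1 then 2 else 1) else 0) := by
  simp only [M2, Matrix.of_apply, Fin.ext_iff]
  split_ifs <;> omega

lemma vvec_succ (r : ℕ) (m : ℕ) :
    vvec r (m + 1) = (M2 r).mulVec (vvec r m) := by
  unfold vvec
  rw [pow_succ', mulVec_mulVec]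

lemma mulVec_apply {r : ℕ} (M : Matrix (Fin r) (Fin r) ℤ) (x : Fin r → ℤ) (i : Fin r) :
    M.mulVec x i = ∑ j : Fin r, M i j * x j := rfl

/-- triangularity: the `m`-th Krylov vector vanishes below index `m`. -/
lemma vvec_eq_zero {r : ℕ} : ∀ (m : ℕ) (i : Fin r), m < (i : ℕ) → vvec r m i = 0 := by
  intro m
  induction m with
  | zero =>
    intro i hi
    simp only [vvec, pow_zero, one_mulVec, dvec]
    rw [if_neg (by omega)]
  | succ m ih =>
    intro i hi
    rw [vvec_succ, mulVec_apply]
    apply Finset.sum_eq_zero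
    intro j _
    by_cases hj : m < (j : ℕ)
    · rw [ih j hj, mul_zero]
    · have : M2 r i j = 0 := by
        rw [M2_apply]
        have h1 : ¬ ((i : ℕ) = (j : ℕ)) := by omega
        have h2 : ¬ ((i : ℕ) + 1 = (j : ℕ)) := by omega
        have h3 : ¬ ((j : ℕ) + 1 = (i : ℕ)) := by omega
        simp [h1, h2, h3]
      rw [this, zero_mul]

/-- the `m`-th Krylov vector has entry `1` at index `m`, for `m < r - 1`. -/
lemma vvec_diag {r : ℕ} (hr : 2 ≤ r) :
    ∀ m (hm : m < r - 1), vvec r m ⟨m, by omega⟩ = 1 := by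
  intro m
  induction m with
  | zero => intro _; simp [vvec, dvec]
  | succ m ih =>
    intro hm
    rw [vvec_succ, mulVec_apply]
    rw [Finset.sum_eq_single (⟨m, by omega⟩ : Fin r)]
    · have hM : M2 r ⟨m + 1, by omega⟩ ⟨m, by omega⟩ = 1 := by
        rw [M2_apply]
        simp only [Fin.val_mk]
        split_ifs <;> omega
      rw [hM, ih (by omega), mul_one]
    · intro j _ hj
      by_cases hjm : m < (j : ℕ)
      · rw [vvec_eq_zero m j hjm, mul_zero]
      · have hjm' : (j : ℕ) < m := by
          rcases Nat.lt_or_ge (j : ℕ) m with h | h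
          · exact h
          · exact absurd (Fin.ext (by omega : (j : ℕ) = m)) hj
        have : M2 r ⟨m + 1, by omega⟩ j = 0 := by
          rw [M2_apply]
          simp only [Fin.val_mk]
          have h1 : ¬ (m + 1 = (j : ℕ)) := by omega
          have h2 : ¬ (m + 1 + 1 = (j : ℕ)) := by omega
          have h3 : ¬ ((j : ℕ) + 1 = m + 1) := by omega
          simp [h1, h2, h3, hjm'.ne]
        rw [this, zero_mul]
    · intro h
      exact absurd (Finset.mem_univ _) h

/-- row sums of `M2`. -/
lemma M2_rowsum {r : ℕ} (hr : 2 ≤ r) (i : Fin r) :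
    (M2 r).mulVec (fun _ => 1) i = 4 - 2 * dvec r i := by
  rw [mulVec_apply]
  simp only [mul_one]
  rw [Finset.sum_congr rfl (fun j _ => M2_apply r i j)]
  rw [Finset.sum_add_distrib, Finset.sum_add_distrib]
  have s1 : (∑ j : Fin r, if (i : ℕ) = (j : ℕ) then (if (i : ℕ) = 0 then 1 else 2) else (0:ℤ))
      = (if (i : ℕ) = 0 then 1 else 2) := by
    rw [Finset.sum_eq_single i]
    · simp
    · intro j _ hj
      rw [if_neg (fun h => hj (Fin.ext h.symm))]
    · intro h; exact absurd (Finset.mem_univ _) h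
  have s2 : (∑ j : Fin r, if (i : ℕ) + 1 = (j : ℕ) then (1:ℤ) else 0)
      = if (i : ℕ) + 1 ≤ r - 1 then 1 else 0 := by
    by_cases hi : (i : ℕ) + 1 ≤ r - 1
    · rw [Finset.sum_eq_single (⟨(i : ℕ) + 1, by omega⟩ : Fin r)]
      · simp [hi]
      · intro j _ hj
        have : ¬ ((i : ℕ) + 1 = (j : ℕ)) := fun h => hj (Fin.ext (by simp [← h]))
        simp [this]
      · intro h; exact absurd (Finset.mem_univ _) h
    · rw [Finset.sum_eq_zero, if_neg hi]
      intro j _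
      have : ¬ ((i : ℕ) + 1 = (j : ℕ)) := by have := j.isLt; have := i.isLt; omega
      simp [this]
  have s3 : (∑ j : Fin r, if (j : ℕ) + 1 = (i : ℕ) then (if (i : ℕ) = r - 1 then 2 else (1:ℤ)) else 0)
      = if 1 ≤ (i : ℕ) then (if (i : ℕ) = r - 1 then 2 else 1) else 0 := by
    by_cases hi : 1 ≤ (i : ℕ)
    · rw [Finset.sum_eq_single (⟨(i : ℕ) - 1, by omega⟩ : Fin r)]
      · simp only [Fin.val_mk]
        rw [if_pos (by omega), if_pos hi]
      · intro j _ hj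
        have : ¬ ((j : ℕ) + 1 = (i : ℕ)) := by
          intro h
          exact hj (Fin.ext (by simp; omega))
        simp [this]
      · intro h; exact absurd (Finset.mem_univ _) h
    · rw [Finset.sum_eq_zero, if_neg hi]
      intro j _
      have : ¬ ((j : ℕ) + 1 = (i : ℕ)) := by omega
      simp [this]
  rw [s1, s2, s3]
  unfold dvec
  have hil := i.isLt
  by_cases h0 : (i : ℕ) = 0
  · have : ¬ ((i : ℕ) = r - 1) := by omega
    rw [if_pos h0, if_pos (by omega), if_neg (by omega), if_pos h0]
    ring
  · by_cases hlast : (i : ℕ) = r - 1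
    · rw [if_neg h0, if_neg (by omega), if_pos (by omega), if_pos hlast, if_neg h0]
      ring
    · rw [if_neg h0, if_pos (by omega), if_pos (by omega), if_neg hlast, if_neg h0]
      ring

/-- the Krylov expansion of `M2^j · e`. -/
lemma krylov {r : ℕ} (hr : 2 ≤ r) :
    ∀ (j : ℕ) (i : Fin r), ((M2 r) ^ j).mulVec (fun _ => 1) i
      = 4 ^ j - 2 * ∑ k ∈ Finset.range j, 4 ^ (j - 1 - k) * vvec r k i := by
  intro j
  induction j with
  | zero => intro i; simp
  | succ j ih =>
    intro i
    have step : ((M2 r) ^ (j + 1)).mulVec (fun _ => 1)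
        = (M2 r).mulVec (((M2 r) ^ j).mulVec (fun _ => 1)) := by
      rw [pow_succ', mulVec_mulVec]
    rw [step, mulVec_apply]
    have expand : ∀ l : Fin r, M2 r i l * ((M2 r) ^ j).mulVec (fun _ => 1) l
        = 4 ^ j * M2 r i l - 2 * ∑ k ∈ Finset.range j, 4 ^ (j - 1 - k) * (M2 r i l * vvec r k l) := by
      intro l
      rw [ih l, mul_sub]
      congr 1
      · ring
      · simp only [Finset.mul_sum]
        apply Finset.sum_congr rfl
        intro k _
        ring
    rw [Finset.sum_congr rfl (fun l _ => expand l)]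
    rw [Finset.sum_sub_distrib, ← Finset.mul_sum, ← Finset.mul_sum]
    rw [Finset.sum_comm]
    have hM2e : (∑ l : Fin r, M2 r i l) = 4 - 2 * dvec r i := by
      have := M2_rowsum hr i
      rw [mulVec_apply] at this
      simpa using this
    rw [hM2e]
    have hMv : ∀ k, (∑ l : Fin r, 4 ^ (j - 1 - k) * (M2 r i l * vvec r k l))
        = 4 ^ (j - 1 - k) * vvec r (k + 1) i := by
      intro k
      rw [← Finset.mul_sum, vvec_succ, mulVec_apply]
    rw [Finset.sum_congr rfl (fun k _ => hMv k)]
    rw [Finset.sum_range_succ' (fun k => 4 ^ (j + 1 - 1 - k) * vvec r k i) j]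
    have hv0 : vvec r 0 i = dvec r i := by simp [vvec]
    rw [hv0]
    have hsc : (∑ k ∈ Finset.range j, 4 ^ (j + 1 - 1 - (k + 1)) * vvec r (k + 1) i)
        = ∑ k ∈ Finset.range j, 4 ^ (j - 1 - k) * vvec r (k + 1) i := by
      apply Finset.sum_congr rfl
      intro k _
      congr 2
      omega
    rw [hsc]
    have he0 : j + 1 - 1 - 0 = j := by omega
    rw [he0]
    ring

/-- The triangular matrix of Krylov vectors (with `e` as last column). -/
def Amat (r : ℕ) : Matrix (Fin r) (Fin r) ℤ :=
  Matrix.of fun i m => if (m : ℕ) = r - 1 then 1 else vvec r (m : ℕ) i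

/-- The coefficient matrix. -/
def Bmat (r : ℕ) : Matrix (Fin r) (Fin r) ℤ :=
  Matrix.of fun m j =>
    if (m : ℕ) = r - 1 then 4 ^ (j : ℕ)
    else if (m : ℕ) < (j : ℕ) then -2 * 4 ^ ((j : ℕ) - 1 - (m : ℕ)) else 0

lemma walkMatrix_eq_mul {r : ℕ} (hr : 2 ≤ r) :
    walkMatrix (M2 r) = Amat r * Bmat r := by
  ext i j
  rw [Matrix.mul_apply]
  have hsplit : ∑ m : Fin r, Amat r i m * Bmat r m j
      = 4 ^ (j : ℕ) + ∑ m : Fin r,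
          (if (m : ℕ) < (j : ℕ) then vvec r (m : ℕ) i * (-2 * 4 ^ ((j : ℕ) - 1 - (m : ℕ))) else 0) := by
    rw [← Finset.add_sum_erase _ _ (Finset.mem_univ (⟨r - 1, by omega⟩ : Fin r))]
    congr 1
    · have hA : Amat r i ⟨r - 1, by omega⟩ = 1 := by simp [Amat]
      have hB : Bmat r (⟨r - 1, by omega⟩ : Fin r) j = 4 ^ (j : ℕ) := by simp [Bmat]
      rw [hA, hB, one_mul]
    · have hglast : (if ((⟨r - 1, by omega⟩ : Fin r) : ℕ) < (j : ℕ)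
          then vvec r ((⟨r - 1, by omega⟩ : Fin r) : ℕ) i
            * (-2 * 4 ^ ((j : ℕ) - 1 - ((⟨r - 1, by omega⟩ : Fin r) : ℕ))) else 0) = 0 := by
        have := j.isLt
        rw [if_neg (by simp; omega)]
      rw [← Finset.sum_erase (f := fun m : Fin r =>
        if (m : ℕ) < (j : ℕ) then vvec r (m : ℕ) i * (-2 * 4 ^ ((j : ℕ) - 1 - (m : ℕ))) else 0)
        Finset.univ hglast]
      apply Finset.sum_congr rfl
      intro m hm
      have hmne : (m : ℕ) ≠ r - 1 := by
        intro h
        exact (Finset.mem_erase.mp hm).1 (Fin.ext (by simp [h]))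
      simp only [Amat, Bmat, Matrix.of_apply, if_neg hmne]
      by_cases hlt : (m : ℕ) < (j : ℕ) <;> simp [hlt]
  rw [hsplit]
  show ((M2 r) ^ (j : ℕ)).mulVec (fun _ => 1) i = _
  rw [krylov hr (j : ℕ) i]
  have hconv : (∑ m : Fin r,
      (if (m : ℕ) < (j : ℕ) then vvec r (m : ℕ) i * (-2 * 4 ^ ((j : ℕ) - 1 - (m : ℕ))) else 0))
      = ∑ k ∈ Finset.range r,
          (if k < (j : ℕ) then vvec r k i * (-2 * 4 ^ ((j : ℕ) - 1 - k)) else 0) :=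
    Fin.sum_univ_eq_sum_range
      (fun k => if k < (j : ℕ) then vvec r k i * (-2 * 4 ^ ((j : ℕ) - 1 - k)) else 0) r
  rw [hconv]
  have hsub : (∑ k ∈ Finset.range r,
      (if k < (j : ℕ) then vvec r k i * (-2 * 4 ^ ((j : ℕ) - 1 - k)) else 0))
      = ∑ k ∈ Finset.range (j : ℕ), vvec r k i * (-2 * 4 ^ ((j : ℕ) - 1 - k)) := by
    rw [← Finset.sum_subset (Finset.range_subset_range.mpr (by have := j.isLt; omega : (j : ℕ) ≤ r))
      (fun k _ hk => if_neg (by simpa using hk))]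
    exact Finset.sum_congr rfl fun k hk => if_pos (Finset.mem_range.mp hk)
  rw [hsub]
  have hneg : (∑ k ∈ Finset.range (j : ℕ), vvec r k i * (-2 * 4 ^ ((j : ℕ) - 1 - k)))
      = -(2 * ∑ k ∈ Finset.range (j : ℕ), 4 ^ ((j : ℕ) - 1 - k) * vvec r k i) := by
    rw [Finset.mul_sum, ← Finset.sum_neg_distrib]
    exact Finset.sum_congr rfl fun k _ => by ring
  rw [hneg]
  ring

lemma det_Amat {r : ℕ} (hr : 2 ≤ r) : (Amat r).det = 1 := by
  rw [Matrix.det_of_upperTriangular]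
  · apply Finset.prod_eq_one
    intro i _
    simp only [Amat, Matrix.of_apply]
    by_cases h : (i : ℕ) = r - 1
    · rw [if_pos h]
    · rw [if_neg h]
      exact vvec_diag hr (i : ℕ) (by have := i.isLt; omega)
  · intro i j hji
    simp only [Amat, Matrix.of_apply]
    have hji' : (j : ℕ) < (i : ℕ) := hji
    rw [if_neg (by have := i.isLt; omega)]
    exact vvec_eq_zero (j : ℕ) i hji'

/-- The unpermuted coefficient matrix (upper triangular). -/
def Bmat' (r : ℕ) : Matrix (Fin r) (Fin r) ℤ :=
  Matrix.of fun m j =>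
    if (m : ℕ) = 0 then 4 ^ (j : ℕ)
    else if (m : ℕ) ≤ (j : ℕ) then -2 * 4 ^ ((j : ℕ) - (m : ℕ)) else 0

lemma det_Bmat'_ne_zero {r : ℕ} (hr : 2 ≤ r) : (Bmat' r).det ≠ 0 := by
  rw [Matrix.det_of_upperTriangular]
  · rw [Finset.prod_ne_zero_iff]
    intro i _
    simp only [Bmat', Matrix.of_apply]
    by_cases h : (i : ℕ) = 0
    · rw [if_pos h]
      positivity
    · rw [if_neg h, if_pos le_rfl, Nat.sub_self, pow_zero, mul_one]
      norm_num
  · intro i j hji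
    simp only [Bmat', Matrix.of_apply]
    have hji' : (j : ℕ) < (i : ℕ) := hji
    rw [if_neg (by omega), if_neg (by omega)]

lemma det_Bmat_ne_zero {r : ℕ} (hr : 2 ≤ r) : (Bmat r).det ≠ 0 := by
  obtain ⟨n, rfl⟩ : ∃ n, r = n + 1 := ⟨r - 1, by omega⟩
  have hperm : Bmat (n + 1) = (Bmat' (n + 1)).submatrix (finRotate (n + 1)) id := by
    ext m j
    simp only [Matrix.submatrix_apply, id]
    rw [finRotate_succ_apply]
    simp only [Bmat, Bmat', Matrix.of_apply]
    rcases eq_or_ne m (Fin.last n) with hm | hm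
    · have h1 : ((m + 1 : Fin (n + 1)) : ℕ) = 0 := by
        subst hm; simp
      have h2 : (m : ℕ) = n + 1 - 1 := by subst hm; simp
      rw [if_pos h2, if_pos h1]
    · have h1 : ((m + 1 : Fin (n + 1)) : ℕ) = (m : ℕ) + 1 := by
        rw [Fin.val_add_one]
        simp [hm]
      have h2 : ¬ ((m : ℕ) = n + 1 - 1) := by
        intro h
        exact hm (Fin.ext (by simp [h]))
      rw [if_neg h2, h1]
      rw [if_neg (by omega : ¬ ((m : ℕ) + 1 = 0))]
      by_cases hlt : (m : ℕ) < (j : ℕ)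
      · rw [if_pos hlt, if_pos (by omega)]
        congr 2
        omega
      · rw [if_neg hlt, if_neg (by omega)]
  rw [hperm, Matrix.det_permute]
  intro h
  rcases mul_eq_zero.mp h with h | h
  · rcases Int.units_eq_one_or (Equiv.Perm.sign (finRotate (n + 1))) with hs | hs <;>
      rw [hs] at h <;> simp at h
  · exact det_Bmat'_ne_zero hr h

lemma det_walkMatrix_ne_zero {r : ℕ} (hr : 2 ≤ r) : (walkMatrix (M2 r)).det ≠ 0 := by
  rw [walkMatrix_eq_mul hr, Matrix.det_mul, det_Amat hr, one_mul]
  exact det_Bmat_ne_zero hr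

/-- The walk matrix of `M₂` has full rank `r` over `ℝ`. -/
theorem rank_walkMatrix_M2 (r : ℕ) (hr : 2 ≤ r) :
    ((walkMatrix (M2 r)).map (Int.cast : ℤ → ℝ)).rank = r := by
  have hdet : ((walkMatrix (M2 r)).map (Int.cast : ℤ → ℝ)).det ≠ 0 := by
    have hdet' := (Int.castRingHom ℝ).map_det (walkMatrix (M2 r))
    rw [RingHom.mapMatrix_apply] at hdet'
    have : ((walkMatrix (M2 r)).map (Int.cast : ℤ → ℝ)).det
        = (((walkMatrix (M2 r)).det : ℤ) : ℝ) := hdet'.symm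
    rw [this]
    exact_mod_cast det_walkMatrix_ne_zero hr
  have hunit : IsUnit ((walkMatrix (M2 r)).map (Int.cast : ℤ → ℝ)) := by
    rw [Matrix.isUnit_iff_isUnit_det]
    exact isUnit_iff_ne_zero.mpr hdet
  rw [Matrix.rank_of_isUnit _ hunit, Fintype.card_fin]
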